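/- Let A : ℝ → Matrix (Fin n) (Fin n) ℝ be continuous. Then the function φ(s) = (I + ∑_{k≥1} ξ^{(k)}A(s)) λ, where ξ^{(1)}A(s) = ∫₀^s A(σ) dσ and ξ^{(k)}A(s) = ∫₀^s A(σ) · ξ^{(k-1)}A(σ) dσ, solves the initial value problem φ'(s) = A(s)φ(s), φ(0) = λ. In particular the series converges for all s. -/

import Mathlib

open Matrix MeasureTheory

/-- The iterated Peano–Baker integrals: `xi A 0 = I` (auxiliary), and for `k ≥ 1`,
`xi A k s = ∫₀^s A(σ) · xi A (k-1) σ dσ`, so that `xi A 1 s = ∫₀^s A(σ) dσ`. -/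
noncomputable def xi {n : ℕ} (A : ℝ → Matrix (Fin n) (Fin n) ℝ) :
    ℕ → ℝ → Matrix (Fin n) (Fin n) ℝ
  | 0, _ => 1
  | k + 1, s => Matrix.of fun i j => ∫ σ in (0:ℝ)..s, (A σ * xi A k σ) i j

namespace PeanoBakerAux

variable {n : ℕ} {A : ℝ → Matrix (Fin n) (Fin n) ℝ}

lemma xi_succ_apply (A : ℝ → Matrix (Fin n) (Fin n) ℝ) (k : ℕ) (s : ℝ) (i j : Fin n) :
    xi A (k + 1) s i j = ∫ σ in (0:ℝ)..s, (A σ * xi A k σ) i j := rfl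

lemma cont_entry (hA : Continuous A) :
    ∀ k, ∀ i j : Fin n, Continuous fun s => xi A k s i j := by
  intro k
  induction k with
  | zero => intro i j; exact continuous_const
  | succ k ih =>
    intro i j
    have hint : Continuous fun σ => (A σ * xi A k σ) i j := by
      simp only [Matrix.mul_apply]
      exact continuous_finset_sum _ fun m _ =>
        (hA.matrix_elem i m).mul (ih m j)
    simpa only [xi_succ_apply] using
      intervalIntegral.continuous_primitive
        (fun a b => (hint.intervalIntegrable a b)) 0

lemma cont_mul_entry (hA : Continuous A) (k : ℕ) (i j : Fin n) :
    Continuous fun σ => (A σ * xi A k σ) i j := by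
  simp only [Matrix.mul_apply]
  exact continuous_finset_sum _ fun m _ => (hA.matrix_elem i m).mul (cont_entry hA k m j)

lemma hasDerivAt_xi (hA : Continuous A) (k : ℕ) (s : ℝ) (i j : Fin n) :
    HasDerivAt (fun t => xi A (k + 1) t i j) ((A s * xi A k s) i j) s :=
  ((cont_mul_entry hA k i j).integral_hasStrictDerivAt 0 s).hasDerivAt

lemma int_abs_pow_nonneg (k : ℕ) {s : ℝ} (hs : 0 ≤ s) :
    ∫ σ in (0:ℝ)..s, |σ| ^ k = s ^ (k + 1) / (k + 1) := by
  have : ∫ σ in (0:ℝ)..s, |σ| ^ k = ∫ σ in (0:ℝ)..s, σ ^ k := by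
    apply intervalIntegral.integral_congr
    intro σ hσ
    rw [Set.uIcc_of_le hs] at hσ
    simp [abs_of_nonneg hσ.1]
  rw [this, integral_pow]
  simp [zero_pow (Nat.succ_ne_zero k)]

lemma abs_int_abs_pow (k : ℕ) (s : ℝ) :
    |∫ σ in (0:ℝ)..s, |σ| ^ k| = |s| ^ (k + 1) / (k + 1) := by
  rcases le_or_gt 0 s with hs | hs
  · rw [int_abs_pow_nonneg k hs, abs_of_nonneg (by positivity), abs_of_nonneg hs]
  · have h1 : ∫ σ in (0:ℝ)..s, |σ| ^ k = ∫ σ in (-s)..(-0:ℝ), |σ| ^ k := by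
      rw [← intervalIntegral.integral_comp_neg (fun x => |x| ^ k)]
      simp
    have h2 : ∫ σ in (-s)..(-0:ℝ), |σ| ^ k = - ∫ σ in (0:ℝ)..(-s), |σ| ^ k := by
      rw [neg_zero, intervalIntegral.integral_symm]
    rw [h1, h2, abs_neg, int_abs_pow_nonneg k (by linarith : (0:ℝ) ≤ -s),
      abs_of_nonneg (div_nonneg (pow_nonneg (by linarith : (0:ℝ) ≤ -s) _) (by positivity)),
      abs_of_neg hs]

lemma mem_uIoc_abs_le {s σ : ℝ} (hσ : σ ∈ Set.uIoc 0 s) : |σ| ≤ |s| := by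
  rcases hσ with ⟨h1, h2⟩
  rw [abs_le]
  exact ⟨le_trans (le_min (neg_nonpos.2 (abs_nonneg s)) (neg_abs_le s)) h1.le,
    h2.trans (max_le (abs_nonneg s) (le_abs_self s))⟩

lemma xi_bound {C R : ℝ} (hC : 0 ≤ C)
    (hAb : ∀ σ : ℝ, |σ| ≤ R → ∀ i m : Fin n, |A σ i m| ≤ C) :
    ∀ k : ℕ, ∀ s : ℝ, |s| ≤ R → ∀ i j : Fin n,
      |xi A k s i j| ≤ (n * C) ^ k * |s| ^ k / Nat.factorial k := by
  intro k
  induction k with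
  | zero =>
    intro s hs i j
    simp only [pow_zero, Nat.factorial_zero, Nat.cast_one, mul_one, one_div]
    rcases eq_or_ne i j with h | h <;> simp [xi, Matrix.one_apply, h]
  | succ k ih =>
    intro s hs i j
    have hnC : (0:ℝ) ≤ n * C := by positivity
    have key : ∀ σ ∈ Set.uIoc (0:ℝ) s,
        |(A σ * xi A k σ) i j| ≤ (n * C) ^ (k + 1) / Nat.factorial k * |σ| ^ k := by
      intro σ hσ
      have hσR : |σ| ≤ R := (mem_uIoc_abs_le hσ).trans hs
      have h1 : |(A σ * xi A k σ) i j| ≤ ∑ m : Fin n, |A σ i m| * |xi A k σ m j| := by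
        rw [Matrix.mul_apply]
        exact (Finset.abs_sum_le_sum_abs _ _).trans (le_of_eq (by simp [abs_mul]))
      have hterm : ∀ m : Fin n, |A σ i m| * |xi A k σ m j| ≤
          C * ((n * C) ^ k * |σ| ^ k / Nat.factorial k) :=
        fun m => mul_le_mul (hAb σ hσR i m) (ih σ hσR m j) (abs_nonneg _) hC
      calc |(A σ * xi A k σ) i j|
          ≤ ∑ _m : Fin n, C * ((n * C) ^ k * |σ| ^ k / Nat.factorial k) :=
            h1.trans (Finset.sum_le_sum fun m _ => hterm m)
        _ = n * (C * ((n * C) ^ k * |σ| ^ k / Nat.factorial k)) := by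
            rw [Finset.sum_const, Finset.card_univ, Fintype.card_fin, nsmul_eq_mul]
        _ = (n * C) ^ (k + 1) / Nat.factorial k * |σ| ^ k := by ring
    have hcont : Continuous fun σ : ℝ => (n * C) ^ (k + 1) / (Nat.factorial k : ℝ) * |σ| ^ k :=
      continuous_const.mul (continuous_abs.pow k)
    have hg : IntervalIntegrable
        (fun σ : ℝ => (n * C) ^ (k + 1) / (Nat.factorial k : ℝ) * |σ| ^ k) volume 0 s :=
      hcont.intervalIntegrable 0 s
    have hb : ‖∫ σ in (0:ℝ)..s, (A σ * xi A k σ) i j‖ ≤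
        |∫ σ in (0:ℝ)..s, (n * C) ^ (k + 1) / (Nat.factorial k : ℝ) * |σ| ^ k| := by
      rcases le_total 0 s with hs0 | hs0
      · exact (intervalIntegral.norm_integral_le_of_norm_le hs0
          (ae_of_all _ fun t ht => by
            have := key t (by rw [Set.uIoc_of_le hs0]; exact ht)
            simpa using this) hg).trans (le_abs_self _)
      · rw [intervalIntegral.integral_symm s 0, intervalIntegral.integral_symm s 0, norm_neg,
          abs_neg]
        exact (intervalIntegral.norm_integral_le_of_norm_le hs0
          (ae_of_all _ fun t ht => by
            have := key t (by rw [Set.uIoc_of_ge hs0]; exact ht)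
            simpa using this) hg.symm).trans (le_abs_self _)
    rw [xi_succ_apply]
    refine le_trans (by simpa using hb) (le_of_eq ?_)
    rw [
      abs_of_nonneg (by positivity : (0:ℝ) ≤ (n * C) ^ (k + 1) / Nat.factorial k),
      abs_int_abs_pow, div_mul_div_comm]
    congr 1
    rw [Nat.factorial_succ]
    push_cast
    ring

lemma exists_entry_bound (hA : Continuous A) (R : ℝ) :
    ∃ C : ℝ, 0 ≤ C ∧ ∀ σ : ℝ, |σ| ≤ R → ∀ i m : Fin n, |A σ i m| ≤ C := by
  have hB : Continuous fun σ => ∑ i : Fin n, ∑ m : Fin n, |A σ i m| :=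
    continuous_finset_sum _ fun i _ =>
      continuous_finset_sum _ fun m _ => (hA.matrix_elem i m).abs
  obtain ⟨C, hC⟩ := (isCompact_Icc (a := -R) (b := R)).exists_bound_of_continuousOn
    hB.continuousOn
  refine ⟨max C 0, le_max_right _ _, fun σ hσ i m => ?_⟩
  have hmem : σ ∈ Set.Icc (-R) R := abs_le.1 hσ
  have h1 : |A σ i m| ≤ ∑ i' : Fin n, ∑ m' : Fin n, |A σ i' m'| := by
    calc |A σ i m| ≤ ∑ m' : Fin n, |A σ i m'| :=
          Finset.single_le_sum (f := fun m' => |A σ i m'|) (fun m' _ => abs_nonneg _)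
            (Finset.mem_univ m)
      _ ≤ ∑ i' : Fin n, ∑ m' : Fin n, |A σ i' m'| :=
          Finset.single_le_sum (f := fun i' => ∑ m' : Fin n, |A σ i' m'|)
            (fun i' _ => Finset.sum_nonneg fun m' _ => abs_nonneg _)
            (Finset.mem_univ i)
  have h2 := hC σ hmem
  rw [Real.norm_eq_abs] at h2
  exact h1.trans ((le_abs_self _).trans (h2.trans (le_max_left _ _)))

lemma summable_shifted (x : ℝ) :
    Summable fun k : ℕ => x ^ (k + 1) / Nat.factorial (k + 1) :=
  (summable_nat_add_iff 1).2 (Real.summable_pow_div_factorial x)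

lemma summable_entry (hA : Continuous A) (s : ℝ) (i j : Fin n) :
    Summable fun k : ℕ => xi A (k + 1) s i j := by
  obtain ⟨C, hC, hAb⟩ := exists_entry_bound hA |s|
  have hb : ∀ k : ℕ, |xi A (k + 1) s i j| ≤ (n * C * |s|) ^ (k + 1) / Nat.factorial (k + 1) := by
    intro k
    have := xi_bound hC hAb (k + 1) s le_rfl i j
    rwa [← mul_pow] at this
  exact Summable.of_abs (Summable.of_nonneg_of_le (fun k => abs_nonneg _) hb
    (summable_shifted _))

lemma summable_xi0 (hA : Continuous A) (s : ℝ) (i j : Fin n) :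
    Summable fun k : ℕ => xi A k s i j :=
  (summable_nat_add_iff 1).1 (summable_entry hA s i j)

lemma summable_mat (hA : Continuous A) (s : ℝ) :
    Summable fun k : ℕ => xi A (k + 1) s :=
  Pi.summable.2 fun i => Pi.summable.2 fun j => summable_entry hA s i j

lemma tsum_entry (hA : Continuous A) (s : ℝ) (i j : Fin n) :
    (∑' k : ℕ, xi A (k + 1) s) i j = ∑' k : ℕ, xi A (k + 1) s i j := by
  erw [tsum_apply (summable_mat hA s), tsum_apply (Pi.summable.1 (summable_mat hA s) i)]

lemma tsum_deriv_eq (hA : Continuous A) (x : ℝ) (i j : Fin n) :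
    (∑' k : ℕ, (A x * xi A k x) i j)
      = (A x * (1 + ∑' k : ℕ, xi A (k + 1) x)) i j := by
  have hsumm : ∀ m : Fin n, Summable fun k : ℕ => A x i m * xi A k x m j :=
    fun m => (summable_xi0 hA x m j).mul_left _
  calc (∑' k : ℕ, (A x * xi A k x) i j)
      = ∑' k : ℕ, ∑ m : Fin n, A x i m * xi A k x m j := by
        simp only [Matrix.mul_apply]
    _ = ∑ m : Fin n, ∑' k : ℕ, A x i m * xi A k x m j :=
        Summable.tsum_finsetSum fun m _ => hsumm m
    _ = ∑ m : Fin n, A x i m * ∑' k : ℕ, xi A k x m j := by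
        simp only [tsum_mul_left]
    _ = ∑ m : Fin n, A x i m * ((1 : Matrix (Fin n) (Fin n) ℝ) m j
          + (∑' k : ℕ, xi A (k + 1) x) m j) := by
        refine Finset.sum_congr rfl fun m _ => ?_
        rw [Summable.tsum_eq_zero_add (summable_xi0 hA x m j), tsum_entry hA x m j]
        rfl
    _ = (A x * (1 + ∑' k : ℕ, xi A (k + 1) x)) i j := by
        rw [Matrix.mul_apply]
        exact Finset.sum_congr rfl fun m _ => by rw [Matrix.add_apply]

lemma hasDerivAt_tsum_entry (hA : Continuous A) (s : ℝ) (i j : Fin n) :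
    HasDerivAt (fun t => ∑' k : ℕ, xi A (k + 1) t i j)
      ((A s * (1 + ∑' k : ℕ, xi A (k + 1) s)) i j) s := by
  set R : ℝ := |s| + 1 with hR
  obtain ⟨C, hC, hAb⟩ := exists_entry_bound hA R
  have hnC : (0:ℝ) ≤ n * C := by positivity
  have hR0 : (0:ℝ) ≤ R := by positivity
  set S : Set ℝ := Set.Ioo (-R) R with hS
  have hsS : s ∈ S := by
    constructor
    · have := neg_abs_le s; simp only [hR]; linarith
    · have := le_abs_self s; simp only [hR]; linarith
  have hmem : ∀ x ∈ S, |x| ≤ R := fun x hx => abs_le.2 ⟨hx.1.le, hx.2.le⟩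
  set u : ℕ → ℝ := fun k => (n * C) * ((n * C * R) ^ k / Nat.factorial k) with hu
  have hu_sum : Summable u := (Real.summable_pow_div_factorial (n * C * R)).mul_left _
  have hbound : ∀ (k : ℕ), ∀ x ∈ S, |(A x * xi A k x) i j| ≤ u k := by
    intro k x hx
    have hxR := hmem x hx
    have h1 : |(A x * xi A k x) i j| ≤ ∑ m : Fin n, |A x i m| * |xi A k x m j| := by
      rw [Matrix.mul_apply]
      exact (Finset.abs_sum_le_sum_abs _ _).trans (le_of_eq (by simp [abs_mul]))
    have h2 : ∀ m : Fin n, |A x i m| * |xi A k x m j| ≤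
        C * ((n * C) ^ k * |x| ^ k / Nat.factorial k) :=
      fun m => mul_le_mul (hAb x hxR i m) (xi_bound hC hAb k x hxR m j) (abs_nonneg _) hC
    calc |(A x * xi A k x) i j|
        ≤ ∑ _m : Fin n, C * ((n * C) ^ k * |x| ^ k / Nat.factorial k) :=
          h1.trans (Finset.sum_le_sum fun m _ => h2 m)
      _ = n * C * ((n * C) ^ k * |x| ^ k / Nat.factorial k) := by
          rw [Finset.sum_const, Finset.card_univ, Fintype.card_fin, nsmul_eq_mul]; ring
      _ ≤ n * C * ((n * C) ^ k * R ^ k / Nat.factorial k) := by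
          have h3 : |x| ^ k ≤ R ^ k := pow_le_pow_left₀ (abs_nonneg x) hxR k
          gcongr
      _ = u k := by simp only [hu]; rw [mul_pow ((n : ℝ) * C) R k]
  have hTU : TendstoUniformlyOn
      (fun (N : Finset ℕ) x => ∑ k ∈ N, (A x * xi A k x) i j)
      (fun x => ∑' k : ℕ, (A x * xi A k x) i j) Filter.atTop S :=
    tendstoUniformlyOn_tsum hu_sum fun k x hx => by
      simpa using hbound k x hx
  have hTU' : TendstoUniformlyOn
      (fun (N : Finset ℕ) x => ∑ k ∈ N, (A x * xi A k x) i j)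
      (fun x => (A x * (1 + ∑' k : ℕ, xi A (k + 1) x)) i j) Filter.atTop S :=
    hTU.congr_right fun x _ => tsum_deriv_eq hA x i j
  exact hasDerivAt_of_tendstoUniformlyOn
    (f := fun (N : Finset ℕ) t => ∑ k ∈ N, xi A (k + 1) t i j)
    isOpen_Ioo hTU'
    (Filter.Eventually.of_forall fun N x hx =>
      HasDerivAt.fun_sum fun k _ => hasDerivAt_xi hA k x i j)
    (fun x hx => (summable_entry hA x i j).hasSum)
    hsS

end PeanoBakerAux

open PeanoBakerAux in
/-- The Picard/Peano–Baker series `φ(s) = (I + ∑_{k≥1} ξ⁽ᵏ⁾A(s)) λ` converges and solves the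
initial value problem `φ' = A(s)φ`, `φ(0) = λ`. -/
theorem stmt_1 {n : ℕ} (A : ℝ → Matrix (Fin n) (Fin n) ℝ)
    (hAcont : Continuous fun s => A s) (l : Fin n → ℝ) :
    (∀ s : ℝ, Summable fun k : ℕ => xi A (k + 1) s) ∧
    (fun s : ℝ => ((1 : Matrix (Fin n) (Fin n) ℝ) + ∑' k : ℕ, xi A (k + 1) s) *ᵥ l) 0 = l ∧
    ∀ s : ℝ, HasDerivAt
      (fun t : ℝ => ((1 : Matrix (Fin n) (Fin n) ℝ) + ∑' k : ℕ, xi A (k + 1) t) *ᵥ l)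
      (A s *ᵥ (((1 : Matrix (Fin n) (Fin n) ℝ) + ∑' k : ℕ, xi A (k + 1) s) *ᵥ l)) s := by
  have hA : Continuous A := hAcont
  refine ⟨summable_mat hA, ?_, ?_⟩
  · have h0 : ∀ k : ℕ, xi A (k + 1) (0:ℝ) = 0 := by
      intro k
      ext i j
      rw [xi_succ_apply, intervalIntegral.integral_same]
      simp
    simp only [h0, tsum_zero, add_zero, Matrix.one_mulVec]
  · intro s
    apply hasDerivAt_pi.2
    intro i
    have hcomp : HasDerivAt
        (fun t => ∑ j' : Fin n, ((1 : Matrix (Fin n) (Fin n) ℝ) i j'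
          + (∑' k : ℕ, xi A (k + 1) t) i j') * l j')
        (∑ j' : Fin n, (A s * (1 + ∑' k : ℕ, xi A (k + 1) s)) i j' * l j') s := by
      refine HasDerivAt.fun_sum fun j' _ => ?_
      have heq : (fun t => (∑' k : ℕ, xi A (k + 1) t) i j')
          = fun t => ∑' k : ℕ, xi A (k + 1) t i j' :=
        funext fun t => tsum_entry hA t i j'
      have hD' : HasDerivAt (fun t => (∑' k : ℕ, xi A (k + 1) t) i j')
          ((A s * (1 + ∑' k : ℕ, xi A (k + 1) s)) i j') s := by
        rw [heq]; exact hasDerivAt_tsum_entry hA s i j'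
      simpa using ((hasDerivAt_const s ((1 : Matrix (Fin n) (Fin n) ℝ) i j')).add hD').mul_const
        (l j')
    have hfun : (fun t : ℝ => (((1 : Matrix (Fin n) (Fin n) ℝ)
        + ∑' k : ℕ, xi A (k + 1) t) *ᵥ l) i)
        = fun t => ∑ j' : Fin n, ((1 : Matrix (Fin n) (Fin n) ℝ) i j'
          + (∑' k : ℕ, xi A (k + 1) t) i j') * l j' := by
      funext t
      simp [Matrix.mulVec, dotProduct, Matrix.add_apply]
    have hder : (A s *ᵥ (((1 : Matrix (Fin n) (Fin n) ℝ) + ∑' k : ℕ, xi A (k + 1) s) *ᵥ l)) i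
        = ∑ j' : Fin n, (A s * (1 + ∑' k : ℕ, xi A (k + 1) s)) i j' * l j' := by
      rw [Matrix.mulVec_mulVec]
      simp [Matrix.mulVec, dotProduct]
    rw [hfun, hder]
    exact hcomp
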